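/- Let M be an Orlicz function and 1 ≤ p < ∞. Then O_p(M) = { real sequences x = (x_k)_{k≥1} : there exists ρ > 0 with Σ_{i=1}^∞ (1/i)(Σ_{k=1}^{i} M(|x_k|/ρ))^p < ∞ } is a complete metric space with respect to the metric η₄(x,y) = inf{ ρ > 0 : (Σ_{i=1}^∞ (1/i)(Σ_{k=1}^{i} M(|x_k − y_k|/ρ))^p)^{1/p} ≤ 1 }. -/

import Mathlib

/-!
Statement 6 (Paper: Lemma 2.2(iv)).  `O_p(M)` is a complete metric space with
respect to the metric `η₄`.  Sequences are indexed so that `x k` represents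
the paper's `x_{k+1}`.
-/

open scoped ENNReal
open Filter

/-- An Orlicz function. -/
def IsOrliczFunction (M : ℝ → ℝ) : Prop :=
  ContinuousOn M (Set.Ici 0) ∧ MonotoneOn M (Set.Ici 0) ∧ ConvexOn ℝ (Set.Ici 0) M ∧
    M 0 = 0 ∧ (∀ x : ℝ, 0 < x → 0 < M x) ∧ Filter.Tendsto M Filter.atTop Filter.atTop

/-- `∑_{i=1}^∞ (1/i) (∑_{k=1}^{i} M (|x_k| / ρ))^p`, valued in `ℝ≥0∞`. -/
noncomputable def opSum (M : ℝ → ℝ) (p : ℝ) (x : ℕ → ℝ) (ρ : ℝ) : ℝ≥0∞ :=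
  ∑' i : ℕ, ENNReal.ofReal (1 / (i + 1 : ℝ)) *
    ENNReal.ofReal (∑ k ∈ Finset.range (i + 1), M (|x k| / ρ)) ^ p

/-- The space `O_p(M)`. -/
def OpM (M : ℝ → ℝ) (p : ℝ) : Set (ℕ → ℝ) :=
  {x | ∃ ρ > 0, opSum M p x ρ < ⊤}

/-- The metric `η₄`. -/
noncomputable def eta4 (M : ℝ → ℝ) (p : ℝ) (x y : ℕ → ℝ) : ℝ :=
  sInf {ρ : ℝ | 0 < ρ ∧ (opSum M p (fun k => x k - y k) ρ) ^ (1 / p) ≤ 1}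

def ballSet (M : ℝ → ℝ) (p : ℝ) (x y : ℕ → ℝ) : Set ℝ :=
  {ρ : ℝ | 0 < ρ ∧ (opSum M p (fun k => x k - y k) ρ) ^ (1 / p) ≤ 1}

namespace OpAux

variable {M : ℝ → ℝ} {p : ℝ}

lemma M_nonneg (hM : IsOrliczFunction M) {t : ℝ} (ht : 0 ≤ t) : 0 ≤ M t := by
  have h0 : M 0 = 0 := hM.2.2.2.1
  calc (0:ℝ) = M 0 := h0.symm
    _ ≤ M t := hM.2.1 Set.self_mem_Ici ht ht

lemma innerSum_nonneg (hM : IsOrliczFunction M) (x : ℕ → ℝ) {ρ : ℝ} (hρ : 0 < ρ) (i : ℕ) :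
    0 ≤ ∑ k ∈ Finset.range (i + 1), M (|x k| / ρ) :=
  Finset.sum_nonneg fun k _ => M_nonneg hM (div_nonneg (abs_nonneg _) hρ.le)

lemma M_convex_pair (hM : IsOrliczFunction M) {a b ρ1 ρ2 : ℝ} (ha : 0 ≤ a) (hb : 0 ≤ b)
    (h1 : 0 < ρ1) (h2 : 0 < ρ2) :
    M ((a + b) / (ρ1 + ρ2)) ≤ ρ1 / (ρ1 + ρ2) * M (a / ρ1) + ρ2 / (ρ1 + ρ2) * M (b / ρ2) := by
  have hs : 0 < ρ1 + ρ2 := by linarith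
  have key : (a + b) / (ρ1 + ρ2) = (ρ1 / (ρ1 + ρ2)) • (a / ρ1) + (ρ2 / (ρ1 + ρ2)) • (b / ρ2) := by
    simp only [smul_eq_mul]
    field_simp
  have := hM.2.2.1.2 (x := a / ρ1) (y := b / ρ2)
    (Set.mem_Ici.2 (div_nonneg ha h1.le)) (Set.mem_Ici.2 (div_nonneg hb h2.le))
    (div_nonneg h1.le hs.le) (div_nonneg h2.le hs.le) (by field_simp)
  rw [key]
  simpa using this

lemma M_div_le (hM : IsOrliczFunction M) {t c : ℝ} (ht : 0 ≤ t) (hc : 1 ≤ c) :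
    M (t / c) ≤ M t / c := by
  have hc0 : 0 < c := lt_of_lt_of_le one_pos hc
  have h1 : (0:ℝ) ≤ 1/c := by positivity
  have h2 : (0:ℝ) ≤ 1 - 1/c := by
    have : 1/c ≤ 1 := by rw [div_le_one hc0]; exact hc
    linarith
  have h3 : 1/c + (1 - 1/c) = 1 := by ring
  have := hM.2.2.1.2 (Set.mem_Ici.2 ht) (Set.self_mem_Ici (a := (0:ℝ))) h1 h2 h3
  have key : t / c = (1/c) • t + (1 - 1/c) • (0:ℝ) := by
    simp [smul_eq_mul]; ring
  rw [key]
  calc M ((1/c) • t + (1 - 1/c) • (0:ℝ)) ≤ (1/c) * M t + (1 - 1/c) * M 0 := by simpa using this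
    _ = M t / c := by rw [hM.2.2.2.1]; ring


lemma tsum_Lp_add_le (hp : 1 ≤ p) (F G : ℕ → ℝ≥0∞) :
    (∑' i, (F i + G i) ^ p) ^ (1/p) ≤ (∑' i, F i ^ p) ^ (1/p) + (∑' i, G i ^ p) ^ (1/p) := by
  have h := ENNReal.lintegral_Lp_add_le (μ := MeasureTheory.Measure.count)
    (f := F) (g := G) measurable_from_nat.aemeasurable measurable_from_nat.aemeasurable hp
  simpa [MeasureTheory.lintegral_count] using h

lemma weighted_minkowski (hp : 1 ≤ p) (W a b c : ℕ → ℝ≥0∞) (habc : ∀ i, c i ≤ a i + b i) :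
    (∑' i, W i * c i ^ p) ^ (1/p) ≤
      (∑' i, W i * a i ^ p) ^ (1/p) + (∑' i, W i * b i ^ p) ^ (1/p) := by
  have hp0 : 0 < p := lt_of_lt_of_le one_pos hp
  set F : ℕ → ℝ≥0∞ := fun i => W i ^ (1/p) * a i with hF
  set G : ℕ → ℝ≥0∞ := fun i => W i ^ (1/p) * b i with hG
  have hWpow : ∀ i : ℕ, (W i ^ (1/p)) ^ p = W i := fun i => by
    rw [← ENNReal.rpow_mul, one_div_mul_cancel hp0.ne', ENNReal.rpow_one]
  have e1 : ∀ i, W i * a i ^ p = F i ^ p := fun i => by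
    rw [hF, ENNReal.mul_rpow_of_nonneg _ _ hp0.le, hWpow]
  have e2 : ∀ i, W i * b i ^ p = G i ^ p := fun i => by
    rw [hG, ENNReal.mul_rpow_of_nonneg _ _ hp0.le, hWpow]
  have e3 : ∀ i, W i * c i ^ p ≤ (F i + G i) ^ p := fun i => by
    rw [← hWpow i, ← ENNReal.mul_rpow_of_nonneg _ _ hp0.le]
    refine ENNReal.rpow_le_rpow ?_ hp0.le
    rw [hF, hG, ← mul_add]
    exact mul_le_mul_right (habc i) _
  calc (∑' i, W i * c i ^ p) ^ (1/p) ≤ (∑' i, (F i + G i) ^ p) ^ (1/p) :=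
        ENNReal.rpow_le_rpow (ENNReal.tsum_le_tsum e3) (by positivity)
    _ ≤ (∑' i, F i ^ p) ^ (1/p) + (∑' i, G i ^ p) ^ (1/p) := tsum_Lp_add_le hp F G
    _ = (∑' i, W i * a i ^ p) ^ (1/p) + (∑' i, W i * b i ^ p) ^ (1/p) := by
        simp only [e1, e2]

lemma tsum_weight_const_mul (hp0 : 0 < p) (co : ℝ≥0∞) (W X : ℕ → ℝ≥0∞) :
    (∑' i, W i * (co * X i) ^ p) ^ (1/p) = co * (∑' i, W i * X i ^ p) ^ (1/p) := by
  have h1 : ∑' i, W i * (co * X i) ^ p = co ^ p * ∑' i, W i * X i ^ p := by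
    rw [← ENNReal.tsum_mul_left]
    congr 1
    funext i
    rw [ENNReal.mul_rpow_of_nonneg _ _ hp0.le]
    ring
  rw [h1, ENNReal.mul_rpow_of_nonneg _ _ (by positivity : (0:ℝ) ≤ 1/p), ← ENNReal.rpow_mul,
    mul_one_div_cancel hp0.ne', ENNReal.rpow_one]

lemma opSum_anti (hM : IsOrliczFunction M) (hp0 : 0 ≤ p) {x : ℕ → ℝ} {ρ ρ' : ℝ}
    (h : 0 < ρ) (hle : ρ ≤ ρ') : opSum M p x ρ' ≤ opSum M p x ρ := by
  have h' : 0 < ρ' := lt_of_lt_of_le h hle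
  refine ENNReal.tsum_le_tsum fun i => ?_
  refine mul_le_mul_right (ENNReal.rpow_le_rpow (ENNReal.ofReal_le_ofReal
    (Finset.sum_le_sum fun k _ => ?_)) hp0) _
  refine hM.2.1 (Set.mem_Ici.2 (by positivity)) (Set.mem_Ici.2 (by positivity)) ?_
  gcongr

lemma opSum_scale (hM : IsOrliczFunction M) (hp0 : 0 < p) {u : ℕ → ℝ} {ρ0 c : ℝ}
    (h0 : 0 < ρ0) (hc : 1 ≤ c) :
    opSum M p u (c * ρ0) ≤ ENNReal.ofReal (1/c) ^ p * opSum M p u ρ0 := by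
  have hc0 : 0 < c := lt_of_lt_of_le one_pos hc
  rw [opSum, opSum, ← ENNReal.tsum_mul_left]
  refine ENNReal.tsum_le_tsum fun i => ?_
  rw [← mul_assoc, mul_comm (ENNReal.ofReal (1/c) ^ p), mul_assoc]
  refine mul_le_mul_right ?_ _
  rw [← ENNReal.mul_rpow_of_nonneg _ _ hp0.le]
  refine ENNReal.rpow_le_rpow ?_ hp0.le
  rw [← ENNReal.ofReal_mul (by positivity)]
  refine ENNReal.ofReal_le_ofReal ?_
  rw [Finset.mul_sum]
  refine Finset.sum_le_sum fun k _ => ?_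
  have he : |u k| / (c * ρ0) = (|u k| / ρ0) / c := by
    rw [div_div, mul_comm]
  rw [he]
  calc M ((|u k|/ρ0)/c) ≤ M (|u k|/ρ0) / c := M_div_le hM (by positivity) hc
    _ = 1/c * M (|u k|/ρ0) := by ring


lemma opSum_convex (hM : IsOrliczFunction M) (hp : 1 ≤ p) (u v : ℕ → ℝ) {ρ1 ρ2 : ℝ}
    (h1 : 0 < ρ1) (h2 : 0 < ρ2) :
    (opSum M p (fun k => u k + v k) (ρ1 + ρ2)) ^ (1/p) ≤
      ENNReal.ofReal (ρ1/(ρ1+ρ2)) * (opSum M p u ρ1) ^ (1/p) +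
        ENNReal.ofReal (ρ2/(ρ1+ρ2)) * (opSum M p v ρ2) ^ (1/p) := by
  have hp0 : 0 < p := lt_of_lt_of_le one_pos hp
  have hs : 0 < ρ1 + ρ2 := by linarith
  have habc : ∀ i, ENNReal.ofReal (∑ k ∈ Finset.range (i+1), M (|u k + v k|/(ρ1+ρ2)))
      ≤ (fun i => ENNReal.ofReal (ρ1/(ρ1+ρ2)) *
            ENNReal.ofReal (∑ k ∈ Finset.range (i+1), M (|u k|/ρ1))) i
        + (fun i => ENNReal.ofReal (ρ2/(ρ1+ρ2)) *
            ENNReal.ofReal (∑ k ∈ Finset.range (i+1), M (|v k|/ρ2))) i := by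
    intro i
    simp only
    rw [← ENNReal.ofReal_mul (by positivity), ← ENNReal.ofReal_mul (by positivity),
      ← ENNReal.ofReal_add
        (mul_nonneg (by positivity) (innerSum_nonneg hM u h1 i))
        (mul_nonneg (by positivity) (innerSum_nonneg hM v h2 i))]
    refine ENNReal.ofReal_le_ofReal ?_
    rw [Finset.mul_sum, Finset.mul_sum, ← Finset.sum_add_distrib]
    refine Finset.sum_le_sum fun k _ => ?_
    calc M (|u k + v k| / (ρ1+ρ2)) ≤ M ((|u k| + |v k|) / (ρ1+ρ2)) :=
          hM.2.1 (Set.mem_Ici.2 (by positivity)) (Set.mem_Ici.2 (by positivity))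
            (by gcongr; exact abs_add_le _ _)
      _ ≤ _ := M_convex_pair hM (abs_nonneg _) (abs_nonneg _) h1 h2
  have eL : opSum M p (fun k => u k + v k) (ρ1+ρ2)
      = ∑' i : ℕ, ENNReal.ofReal (1/(i+1:ℝ)) *
          (ENNReal.ofReal (∑ k ∈ Finset.range (i+1), M (|u k + v k|/(ρ1+ρ2)))) ^ p := rfl
  have eA : opSum M p u ρ1 = ∑' i : ℕ, ENNReal.ofReal (1/(i+1:ℝ)) *
      (ENNReal.ofReal (∑ k ∈ Finset.range (i+1), M (|u k|/ρ1))) ^ p := rfl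
  have eB : opSum M p v ρ2 = ∑' i : ℕ, ENNReal.ofReal (1/(i+1:ℝ)) *
      (ENNReal.ofReal (∑ k ∈ Finset.range (i+1), M (|v k|/ρ2))) ^ p := rfl
  rw [eL, eA, eB, ← tsum_weight_const_mul hp0, ← tsum_weight_const_mul hp0]
  exact weighted_minkowski hp _ _ _ _ habc

lemma ballSet_add_mem (hM : IsOrliczFunction M) (hp : 1 ≤ p) {x y z : ℕ → ℝ} {ρ1 ρ2 : ℝ}
    (h1 : ρ1 ∈ ballSet M p x y) (h2 : ρ2 ∈ ballSet M p y z) : ρ1 + ρ2 ∈ ballSet M p x z := by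
  obtain ⟨h1p, h1s⟩ := h1
  obtain ⟨h2p, h2s⟩ := h2
  refine ⟨by linarith, ?_⟩
  have hfun : (fun k => x k - z k) = fun k => (x k - y k) + (y k - z k) := by
    funext k; ring
  show (opSum M p (fun k => x k - z k) (ρ1+ρ2)) ^ (1/p) ≤ 1
  rw [hfun]
  calc (opSum M p (fun k => (x k - y k) + (y k - z k)) (ρ1+ρ2)) ^ (1/p)
      ≤ ENNReal.ofReal (ρ1/(ρ1+ρ2)) * (opSum M p (fun k => x k - y k) ρ1) ^ (1/p)
        + ENNReal.ofReal (ρ2/(ρ1+ρ2)) * (opSum M p (fun k => y k - z k) ρ2) ^ (1/p) :=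
        opSum_convex hM hp _ _ h1p h2p
    _ ≤ ENNReal.ofReal (ρ1/(ρ1+ρ2)) * 1 + ENNReal.ofReal (ρ2/(ρ1+ρ2)) * 1 := by
        gcongr
    _ = 1 := by
        rw [mul_one, mul_one, ← ENNReal.ofReal_add (by positivity) (by positivity),
          ← add_div, div_self (ne_of_gt (by linarith : (0:ℝ) < ρ1+ρ2))]
        exact ENNReal.ofReal_one


lemma tsum_le_of_range_le {f : ℕ → ℝ≥0∞} {c : ℝ≥0∞}
    (h : ∀ n, ∑ i ∈ Finset.range n, f i ≤ c) : ∑' i, f i ≤ c := by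
  rw [ENNReal.tsum_eq_iSup_sum' (fun n => Finset.range n) Finset.exists_nat_subset_range]
  exact iSup_le h

lemma pow_inv_le_one (hp0 : 0 < p) (A : ℝ≥0∞) : A ^ (1/p) ≤ 1 ↔ A ≤ 1 := by
  constructor
  · intro h
    have := ENNReal.rpow_le_rpow h hp0.le
    rwa [← ENNReal.rpow_mul, one_div_mul_cancel hp0.ne', ENNReal.rpow_one,
      ENNReal.one_rpow] at this
  · intro h
    have := ENNReal.rpow_le_rpow h (by positivity : (0:ℝ) ≤ 1/p)
    rwa [ENNReal.one_rpow] at this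

lemma opSum_lt_top_of_mem (hp : 1 ≤ p) {u : ℕ → ℝ} {ρ : ℝ}
    (h : (opSum M p u ρ) ^ (1/p) ≤ 1) : opSum M p u ρ < ⊤ := by
  have hp0 : 0 < p := lt_of_lt_of_le one_pos hp
  exact lt_of_le_of_lt ((pow_inv_le_one hp0 _).1 h) (by simp)

lemma opSum_add_lt_top (hM : IsOrliczFunction M) (hp : 1 ≤ p) {u v : ℕ → ℝ} {ρ1 ρ2 : ℝ}
    (h1 : 0 < ρ1) (h2 : 0 < ρ2)
    (hu : opSum M p u ρ1 < ⊤) (hv : opSum M p v ρ2 < ⊤) :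
    opSum M p (fun k => u k + v k) (ρ1 + ρ2) < ⊤ := by
  have hp0 : 0 < p := lt_of_lt_of_le one_pos hp
  have h := opSum_convex hM hp u v h1 h2
  have hfin : ENNReal.ofReal (ρ1/(ρ1+ρ2)) * (opSum M p u ρ1) ^ (1/p) +
      ENNReal.ofReal (ρ2/(ρ1+ρ2)) * (opSum M p v ρ2) ^ (1/p) < ⊤ := by
    refine ENNReal.add_lt_top.2 ⟨?_, ?_⟩
    · exact ENNReal.mul_lt_top ENNReal.ofReal_lt_top
        (ENNReal.rpow_lt_top_of_nonneg (by positivity) hu.ne)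
    · exact ENNReal.mul_lt_top ENNReal.ofReal_lt_top
        (ENNReal.rpow_lt_top_of_nonneg (by positivity) hv.ne)
  by_contra hc
  rw [not_lt, top_le_iff] at hc
  rw [hc, ENNReal.top_rpow_of_pos (by positivity)] at h
  exact absurd (lt_of_le_of_lt h hfin) (by simp)

lemma mem_ballSet_of_le (hM : IsOrliczFunction M) (hp0 : 0 ≤ p) {x y : ℕ → ℝ} {ρ ρ' : ℝ}
    (h : ρ ∈ ballSet M p x y) (hle : ρ ≤ ρ') : ρ' ∈ ballSet M p x y :=
  ⟨lt_of_lt_of_le h.1 hle,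
    le_trans (ENNReal.rpow_le_rpow (opSum_anti hM hp0 h.1 hle) (by positivity)) h.2⟩

lemma exists_ballSet_gen (hM : IsOrliczFunction M) (hp : 1 ≤ p) {u : ℕ → ℝ} {ρ0 : ℝ}
    (h0 : 0 < ρ0) (hfin : opSum M p u ρ0 < ⊤) :
    ∃ ρ, 0 < ρ ∧ (opSum M p u ρ) ^ (1/p) ≤ 1 := by
  have hp0 : 0 < p := lt_of_lt_of_le one_pos hp
  set D := (opSum M p u ρ0) ^ (1/p) with hD
  have hDlt : D < ⊤ := ENNReal.rpow_lt_top_of_nonneg (by positivity) hfin.ne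
  set c := D.toReal + 1 with hc
  have hc1 : 1 ≤ c := by
    have := ENNReal.toReal_nonneg (a := D)
    rw [hc]; linarith
  have hcp : 0 < c := lt_of_lt_of_le one_pos hc1
  refine ⟨c * ρ0, by positivity, ?_⟩
  calc (opSum M p u (c * ρ0)) ^ (1/p)
      ≤ (ENNReal.ofReal (1/c) ^ p * opSum M p u ρ0) ^ (1/p) :=
        ENNReal.rpow_le_rpow (opSum_scale hM hp0 h0 hc1) (by positivity)
    _ = ENNReal.ofReal (1/c) * D := by
        rw [ENNReal.mul_rpow_of_nonneg _ _ (by positivity), ← ENNReal.rpow_mul,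
          mul_one_div_cancel hp0.ne', ENNReal.rpow_one, hD]
    _ ≤ 1 := by
        rw [← ENNReal.ofReal_toReal hDlt.ne, ← ENNReal.ofReal_mul (by positivity)]
        refine ENNReal.ofReal_le_one.2 ?_
        rw [one_div, inv_mul_eq_div, div_le_one hcp, hc]
        linarith

lemma opSum_neg (u : ℕ → ℝ) (ρ : ℝ) :
    opSum M p (fun k => -(u k)) ρ = opSum M p u ρ := by
  simp only [opSum, abs_neg]

lemma ballSet_nonempty (hM : IsOrliczFunction M) (hp : 1 ≤ p) {x y : ℕ → ℝ}
    (hx : x ∈ OpM M p) (hy : y ∈ OpM M p) : (ballSet M p x y).Nonempty := by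
  obtain ⟨ρx, hρx, hxf⟩ := hx
  obtain ⟨ρy, hρy, hyf⟩ := hy
  have hyf' : opSum M p (fun k => -(y k)) ρy < ⊤ := by rw [opSum_neg]; exact hyf
  have hfin := opSum_add_lt_top hM hp hρx hρy hxf hyf'
  have he : (fun k => x k + -(y k)) = fun k => x k - y k := by funext k; ring
  rw [he] at hfin
  obtain ⟨ρ, h1, h2⟩ := exists_ballSet_gen hM hp (by positivity) hfin
  exact ⟨ρ, h1, h2⟩

lemma ballSet_bdd {x y : ℕ → ℝ} : BddBelow (ballSet M p x y) :=
  ⟨0, fun ρ h => h.1.le⟩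

lemma eta4_eq (x y : ℕ → ℝ) : eta4 M p x y = sInf (ballSet M p x y) := rfl

lemma eta4_nonneg (x y : ℕ → ℝ) : 0 ≤ eta4 M p x y :=
  Real.sInf_nonneg fun ρ h => h.1.le

lemma eta4_self (hM : IsOrliczFunction M) (hp : 1 ≤ p) (x : ℕ → ℝ) : eta4 M p x x = 0 := by
  have hp0 : 0 < p := lt_of_lt_of_le one_pos hp
  have hmem : ∀ ρ : ℝ, 0 < ρ → ρ ∈ ballSet M p x x := by
    intro ρ hρ
    refine ⟨hρ, ?_⟩
    have h0 : opSum M p (fun k => x k - x k) ρ = 0 := by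
      simp [opSum, sub_self, hM.2.2.2.1, ENNReal.zero_rpow_of_pos hp0]
    rw [h0, ENNReal.zero_rpow_of_pos (by positivity)]
    exact zero_le_one
  refine le_antisymm ?_ (eta4_nonneg x x)
  rw [eta4_eq]
  by_contra hcon
  push_neg at hcon
  have := csInf_le ballSet_bdd (hmem (sInf (ballSet M p x x) / 2) (by linarith))
  linarith

lemma opSum_congr_abs {u v : ℕ → ℝ} (h : ∀ k, |u k| = |v k|) (ρ : ℝ) :
    opSum M p u ρ = opSum M p v ρ := by
  unfold opSum
  congr 1
  funext i
  have he : ∑ k ∈ Finset.range (i+1), M (|u k|/ρ) = ∑ k ∈ Finset.range (i+1), M (|v k|/ρ) :=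
    Finset.sum_congr rfl fun k _ => by rw [h k]
  rw [he]

lemma eta4_comm (x y : ℕ → ℝ) : eta4 M p x y = eta4 M p y x := by
  unfold eta4
  congr 1
  ext ρ
  simp only [Set.mem_setOf_eq]
  rw [opSum_congr_abs (u := fun k => x k - y k) (v := fun k => y k - x k)
    (fun k => by simp [abs_sub_comm]) ρ]

lemma eta4_triangle (hM : IsOrliczFunction M) (hp : 1 ≤ p) {x y z : ℕ → ℝ}
    (hx : x ∈ OpM M p) (hy : y ∈ OpM M p) (hz : z ∈ OpM M p) :
    eta4 M p x z ≤ eta4 M p x y + eta4 M p y z := by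
  have hne1 := ballSet_nonempty hM hp hx hy
  have hne2 := ballSet_nonempty hM hp hy hz
  rw [eta4_eq, eta4_eq, eta4_eq]
  refine le_of_forall_sub_le fun ε hε => ?_
  obtain ⟨ρ1, hρ1, h1⟩ := exists_lt_of_csInf_lt hne1
    (lt_add_of_pos_right _ (by linarith : (0:ℝ) < ε/2))
  obtain ⟨ρ2, hρ2, h2⟩ := exists_lt_of_csInf_lt hne2
    (lt_add_of_pos_right _ (by linarith : (0:ℝ) < ε/2))
  have hmem := ballSet_add_mem hM hp hρ1 hρ2
  have hle : sInf (ballSet M p x z) ≤ ρ1 + ρ2 := csInf_le ballSet_bdd hmem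
  linarith

lemma coord_bound (hM : IsOrliczFunction M) (hp : 1 ≤ p) {u : ℕ → ℝ} {ρ : ℝ} (hρ : 0 < ρ)
    (h : opSum M p u ρ ≤ 1) (k : ℕ) : M (|u k| / ρ) ≤ ((k:ℝ)+1) ^ (1/p) := by
  have hp0 : 0 < p := lt_of_lt_of_le one_pos hp
  set A := ∑ j ∈ Finset.range (k+1), M (|u j|/ρ) with hA
  have hA0 : 0 ≤ A := innerSum_nonneg hM u hρ k
  have hterm : ENNReal.ofReal (1/(k+1:ℝ)) * ENNReal.ofReal A ^ p ≤ 1 :=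
    le_trans (ENNReal.le_tsum k) h
  have h2 : (1/(k+1:ℝ)) * A ^ p ≤ 1 := by
    rw [ENNReal.ofReal_rpow_of_nonneg hA0 hp0.le, ← ENNReal.ofReal_mul (by positivity)] at hterm
    exact ENNReal.ofReal_le_one.1 hterm
  have h3 : A ^ p ≤ (k:ℝ)+1 := by
    have hk : (0:ℝ) < (k:ℝ)+1 := by positivity
    rwa [one_div, inv_mul_eq_div, div_le_one hk] at h2
  have h4 : A ≤ ((k:ℝ)+1) ^ (1/p) := by
    have h5 := Real.rpow_le_rpow (by positivity) h3 (by positivity : (0:ℝ) ≤ 1/p)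
    rwa [← Real.rpow_mul hA0, mul_one_div_cancel hp0.ne', Real.rpow_one] at h5
  refine le_trans ?_ h4
  rw [hA]
  exact Finset.single_le_sum (f := fun j => M (|u j|/ρ))
    (fun j _ => M_nonneg hM (by positivity)) (Finset.self_mem_range_succ k)


lemma eta4_eq_zero_imp (hM : IsOrliczFunction M) (hp : 1 ≤ p) {x y : ℕ → ℝ}
    (hne : (ballSet M p x y).Nonempty) (h : eta4 M p x y = 0) : x = y := by
  have hp0 : 0 < p := lt_of_lt_of_le one_pos hp
  funext k
  by_contra hxy
  have hc : 0 < |x k - y k| := abs_pos.2 (sub_ne_zero.2 hxy)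
  set B := ((k:ℝ)+1) ^ (1/p) with hB
  obtain ⟨T, hT⟩ := Filter.eventually_atTop.1 (Filter.tendsto_atTop.1 hM.2.2.2.2.2 (B+1))
  set T' := max T 1 with hT'
  have hT'pos : (0:ℝ) < T' := lt_of_lt_of_le one_pos (le_max_right T 1)
  have hpos : 0 < |x k - y k| / T' := by positivity
  have h' : sInf (ballSet M p x y) < |x k - y k| / T' := by
    rw [← eta4_eq, h]; exact hpos
  obtain ⟨ρ, hρmem, hρlt⟩ := exists_lt_of_csInf_lt hne h'
  have hb : M (|x k - y k| / ρ) ≤ B :=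
    coord_bound hM hp hρmem.1 ((pow_inv_le_one hp0 _).1 hρmem.2) k
  have hTρ : T ≤ |x k - y k| / ρ := by
    have h1 : ρ * T' < |x k - y k| := by rwa [lt_div_iff₀ hT'pos] at hρlt
    have h2 : T' ≤ |x k - y k| / ρ := by
      rw [le_div_iff₀ hρmem.1]
      calc T' * ρ = ρ * T' := mul_comm _ _
        _ ≤ |x k - y k| := h1.le
    exact le_trans (le_max_left T 1) h2
  have := hT _ hTρ
  linarith

end OpAux

open OpAux in
theorem Op_complete_metric (M : ℝ → ℝ) (hM : IsOrliczFunction M) (p : ℝ) (hp : 1 ≤ p) :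
    ∃ inst : MetricSpace (OpM M p),
      (∀ a b : OpM M p, @dist _ inst.toDist a b = eta4 M p a.1 b.1) ∧
        @CompleteSpace _ inst.toUniformSpace := by
  have hp0 : 0 < p := lt_of_lt_of_le one_pos hp
  classical
  letI inst : MetricSpace (OpM M p) :=
    { dist := fun a b => eta4 M p a.1 b.1
      dist_self := fun a => eta4_self hM hp a.1
      dist_comm := fun a b => eta4_comm a.1 b.1
      dist_triangle := fun a b c => eta4_triangle hM hp a.2 b.2 c.2
      eq_of_dist_eq_zero := fun {a b} h => Subtype.ext
        (eta4_eq_zero_imp hM hp (ballSet_nonempty hM hp a.2 b.2) h) }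
  refine ⟨inst, fun a b => rfl, ?_⟩
  apply Metric.complete_of_cauchySeq_tendsto
  intro u hu
  rw [Metric.cauchySeq_iff] at hu
  have key : ∀ ε : ℝ, 0 < ε → ∃ N, ∀ m, N ≤ m → ∀ n, N ≤ n →
      opSum M p (fun k => (u m).1 k - (u n).1 k) ε ≤ 1 := by
    intro ε hε
    obtain ⟨N, hN⟩ := hu ε hε
    refine ⟨N, fun m hm n hn => ?_⟩
    have hne := ballSet_nonempty hM hp (u m).2 (u n).2
    have hd' : sInf (ballSet M p (u m).1 (u n).1) < ε := hN m hm n hn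
    obtain ⟨ρ, hρ, hρε⟩ := exists_lt_of_csInf_lt hne hd'
    have hmem := mem_ballSet_of_le hM hp0.le hρ hρε.le
    exact (pow_inv_le_one hp0 _).1 hmem.2
  have hcoord : ∀ k : ℕ, ∃ L : ℝ,
      Filter.Tendsto (fun n => (u n).1 k) Filter.atTop (nhds L) := by
    intro k
    have hC : CauchySeq (fun n => (u n).1 k) := by
      rw [Metric.cauchySeq_iff]
      intro ε' hε'
      set B := ((k:ℝ)+1) ^ (1/p) with hB
      obtain ⟨T, hT⟩ := Filter.eventually_atTop.1 (Filter.tendsto_atTop.1 hM.2.2.2.2.2 (B+1))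
      set T' := max T 1 with hT'
      have hT'pos : (0:ℝ) < T' := lt_of_lt_of_le one_pos (le_max_right T 1)
      obtain ⟨N, hN⟩ := key (ε'/T') (by positivity)
      refine ⟨N, fun m hm n hn => ?_⟩
      have h1 : M (|(u m).1 k - (u n).1 k| / (ε'/T')) ≤ B :=
        coord_bound hM hp (by positivity) (hN m hm n hn) k
      have h2 : |(u m).1 k - (u n).1 k| / (ε'/T') < T' := by
        by_contra hcon
        push_neg at hcon
        have := hT _ (le_trans (le_max_left T 1) hcon)
        linarith
      rw [div_lt_iff₀ (by positivity : (0:ℝ) < ε'/T')] at h2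
      rw [Real.dist_eq]
      calc |(u m).1 k - (u n).1 k| < T' * (ε'/T') := h2
        _ = ε' := by field_simp
    exact cauchySeq_tendsto_of_complete hC
  choose x hx using hcoord
  have limit_bound : ∀ ε : ℝ, 0 < ε → ∃ N, ∀ n, N ≤ n →
      opSum M p (fun k => (u n).1 k - x k) ε ≤ 1 := by
    intro ε hε
    obtain ⟨N, hN⟩ := key ε hε
    refine ⟨N, fun n hn => ?_⟩
    refine tsum_le_of_range_le fun I => ?_
    set r : (ℕ → ℝ) → ℝ := fun y => ∑ i ∈ Finset.range I,
      (1/(i+1:ℝ)) * (∑ k ∈ Finset.range (i+1), M (|(u n).1 k - y k|/ε)) ^ p with hr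
    have hofr : ∀ y : ℕ → ℝ, ENNReal.ofReal (r y) = ∑ i ∈ Finset.range I,
        ENNReal.ofReal (1/(i+1:ℝ)) *
          ENNReal.ofReal (∑ k ∈ Finset.range (i+1), M (|(u n).1 k - y k|/ε)) ^ p := by
      intro y
      rw [hr]
      simp only
      rw [ENNReal.ofReal_sum_of_nonneg (fun i _ => mul_nonneg (by positivity)
        (Real.rpow_nonneg (innerSum_nonneg hM (fun k => (u n).1 k - y k) hε i) p))]
      refine Finset.sum_congr rfl fun i _ => ?_
      rw [ENNReal.ofReal_mul (by positivity),
        ENNReal.ofReal_rpow_of_nonneg (innerSum_nonneg hM (fun k => (u n).1 k - y k) hε i)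
          hp0.le]
    have hrle : ∀ m, N ≤ m → r ((u m).1) ≤ 1 := by
      intro m hm
      have h2 : ∑ i ∈ Finset.range I, ENNReal.ofReal (1/(i+1:ℝ)) *
          ENNReal.ofReal (∑ k ∈ Finset.range (i+1), M (|(u n).1 k - (u m).1 k|/ε)) ^ p ≤ 1 :=
        le_trans (ENNReal.sum_le_tsum _) (hN n hn m hm)
      have h3 : ENNReal.ofReal (r ((u m).1)) ≤ 1 := le_trans (le_of_eq (hofr _)) h2
      exact ENNReal.ofReal_le_one.1 h3
    have hrlim : Filter.Tendsto (fun m => r ((u m).1)) Filter.atTop (nhds (r x)) := by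
      rw [hr]
      simp only
      refine tendsto_finset_sum _ fun i _ => ?_
      refine Filter.Tendsto.const_mul _ ?_
      have hsum : Filter.Tendsto
          (fun m => ∑ k ∈ Finset.range (i+1), M (|(u n).1 k - (u m).1 k|/ε))
          Filter.atTop (nhds (∑ k ∈ Finset.range (i+1), M (|(u n).1 k - x k|/ε))) := by
        refine tendsto_finset_sum _ fun k _ => ?_
        have hg : Filter.Tendsto (fun m => |(u n).1 k - (u m).1 k|/ε) Filter.atTop
            (nhds (|(u n).1 k - x k|/ε)) := (((hx k).const_sub _).abs).div_const _
        have hcw : ContinuousWithinAt M (Set.Ici 0) (|(u n).1 k - x k|/ε) :=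
          hM.1 _ (Set.mem_Ici.2 (by positivity))
        refine hcw.tendsto.comp ?_
        rw [tendsto_nhdsWithin_iff]
        exact ⟨hg, Filter.Eventually.of_forall fun m => Set.mem_Ici.2 (by positivity)⟩
      have hcont : ContinuousAt (fun t : ℝ => t ^ p)
          (∑ k ∈ Finset.range (i+1), M (|(u n).1 k - x k|/ε)) :=
        Real.continuousAt_rpow_const _ _ (Or.inr hp0.le)
      exact hcont.tendsto.comp hsum
    have hrx : r x ≤ 1 :=
      le_of_tendsto hrlim (Filter.eventually_atTop.2 ⟨N, fun m hm => hrle m hm⟩)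
    exact le_trans (le_of_eq (hofr x).symm) (ENNReal.ofReal_le_one.2 hrx)
  obtain ⟨N1, hN1⟩ := limit_bound 1 one_pos
  have hfin1 : opSum M p (fun k => (u N1).1 k - x k) 1 < ⊤ :=
    lt_of_le_of_lt (hN1 N1 le_rfl) (by simp)
  obtain ⟨ρ0, hρ0, hρf⟩ := (u N1).2
  have hneg : opSum M p (fun k => -((u N1).1 k - x k)) 1 < ⊤ := by
    rw [opSum_neg]; exact hfin1
  have hadd := opSum_add_lt_top hM hp hρ0 one_pos hρf hneg
  have he : (fun k => (u N1).1 k + -((u N1).1 k - x k)) = x := by funext k; ring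
  rw [he] at hadd
  have hxmem : x ∈ OpM M p := ⟨ρ0 + 1, by positivity, hadd⟩
  refine ⟨⟨x, hxmem⟩, ?_⟩
  rw [Metric.tendsto_atTop]
  intro ε hε
  obtain ⟨N, hN⟩ := limit_bound (ε/2) (by linarith)
  refine ⟨N, fun n hn => ?_⟩
  have hmem : (ε/2) ∈ ballSet M p (u n).1 x :=
    ⟨by linarith, (pow_inv_le_one hp0 _).2 (hN n hn)⟩
  have hdle : dist (u n) (⟨x, hxmem⟩ : OpM M p) ≤ ε/2 := csInf_le ballSet_bdd hmem
  linarith
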